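/- For d ≥ 2 and N ≥ 1, the function f_{d,N}(x,y) = ⌊y/2⌋·2^{(2d-3)N+2} + 2σ_{d-1,N}(x) + (y mod 2), defined for x ∈ Z^{d-1} and y ∈ Z, is injective on (-2^N, 2^N)^d ∩ Z^d. -/
import Mathlib


/-- `f_{d,N}`, with `d = m + 1`, viewed as a map on pairs `(x, y) ∈ ℤ^{d-1} × ℤ`:
`f(x,y) = ⌊y/2⌋·2^{(2d-3)N+2} + 2σ_{d-1,N}(x) + (y mod 2)`.
(Note: `ℤ` division/mod in Lean is Euclidean, which agrees with floor for divisor `2`.) -/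
def fdN (m N : ℕ) (p : (Fin m → ℤ) × ℤ) : ℤ :=
  (p.2 / 2) * 2 ^ ((2 * m - 1) * N + 2) +
    2 * (∑ j : Fin m, p.1 j * 4 ^ ((j : ℕ) * N)) + p.2 % 2

/-- Digits of bounded absolute value with zero value are all zero. -/
lemma digits_all_zero : ∀ (n : ℕ) (c : ℤ) (d : ℕ → ℤ), (∀ j, |d j| < c) →
    (∑ j ∈ Finset.range n, d j * c ^ j = 0) → ∀ j < n, d j = 0 := by
  intro n
  induction n with
  | zero => intro c d _ _ j hj; omega
  | succ n ih =>
    intro c d hd hsum j hj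
    have hc : 0 < c := lt_of_le_of_lt (abs_nonneg (d 0)) (hd 0)
    rw [Finset.sum_range_succ'] at hsum
    have hfac : ∀ i : ℕ, d (i + 1) * c ^ (i + 1) = (d (i + 1) * c ^ i) * c := by
      intro i; ring
    rw [Finset.sum_congr rfl (fun i _ => hfac i), ← Finset.sum_mul] at hsum
    set S := ∑ i ∈ Finset.range n, d (i + 1) * c ^ i with hS
    have hd0 : d 0 * c ^ 0 = d 0 := by ring
    rw [hd0] at hsum
    -- hsum : S * c + d 0 = 0
    have hSabs : |S| * c < c := by
      have : |d 0| < c := hd 0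
      have h1 : |S * c| = |S| * c := by
        rw [abs_mul, abs_of_pos hc]
      have h2 : S * c = -(d 0) := by linarith
      rw [← h1, h2, abs_neg]
      exact hd 0
    have hS0 : S = 0 := by
      have : |S| < 1 := by
        by_contra h
        push_neg at h
        have := mul_le_mul_of_nonneg_right h (le_of_lt hc)
        simp only [one_mul] at this
        linarith
      have h2 := abs_lt.mp this
      omega
    have hd0z : d 0 = 0 := by rw [hS0] at hsum; linarith
    match j with
    | 0 => exact hd0z
    | (k + 1) =>
      have := ih c (fun i => d (i + 1)) (fun i => hd (i + 1)) (by simpa using hS0) k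
        (by omega)
      exact this

/-- Bound on the digit sum `σ`. -/
lemma abs_sigma_le (m N : ℕ) (hm : 1 ≤ m) (hN : 1 ≤ N) (x : Fin m → ℤ)
    (hx : ∀ j : Fin m, |x j| < 2 ^ N) :
    |∑ j : Fin m, x j * 4 ^ ((j : ℕ) * N)| ≤ 2 ^ ((2 * m - 1) * N) - 1 := by
  set c : ℤ := 4 ^ N with hc
  have hcpow : ∀ j : ℕ, (4 : ℤ) ^ (j * N) = c ^ j := by
    intro j
    rw [hc, ← pow_mul, mul_comm]
  set S := ∑ i ∈ Finset.range m, c ^ i with hSdef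
  have hgeom : S * (c - 1) = c ^ m - 1 := geom_sum_mul c m
  have hcpos : (0 : ℤ) < c := by positivity
  have hSpos : 0 ≤ S := Finset.sum_nonneg fun i _ => by positivity
  -- |σ| ≤ (2^N - 1) * S
  have h1 : |∑ j : Fin m, x j * 4 ^ ((j : ℕ) * N)| ≤ (2 ^ N - 1) * S := by
    calc |∑ j : Fin m, x j * 4 ^ ((j : ℕ) * N)|
        ≤ ∑ j : Fin m, |x j * 4 ^ ((j : ℕ) * N)| := Finset.abs_sum_le_sum_abs _ _
      _ ≤ ∑ j : Fin m, (2 ^ N - 1) * c ^ (j : ℕ) := by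
          apply Finset.sum_le_sum
          intro j _
          rw [abs_mul, hcpow]
          have h4 : |c ^ (j : ℕ)| = c ^ (j : ℕ) := abs_of_pos (by positivity)
          rw [h4]
          apply mul_le_mul_of_nonneg_right _ (by positivity)
          have := hx j
          omega
      _ = (2 ^ N - 1) * S := by
          rw [hSdef, Finset.mul_sum, Fin.sum_univ_eq_sum_range (fun i => (2^N - 1) * c ^ i) m]
  -- (2^N - 1)(2^N + 1) = c - 1
  have h2 : ((2 : ℤ) ^ N - 1) * (2 ^ N + 1) = c - 1 := by
    have : (c : ℤ) = 2 ^ N * 2 ^ N := by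
      rw [hc]
      rw [show (4 : ℤ) = 2 ^ 2 by norm_num, ← pow_mul, two_mul, pow_add]
    rw [this]; ring
  have h3 : c ^ m = 2 ^ N * 2 ^ ((2 * m - 1) * N) := by
    rw [hc, ← pow_mul]
    rw [show (4 : ℤ) = 2 ^ 2 by norm_num, ← pow_mul, ← pow_add]
    congr 1
    obtain ⟨m', rfl⟩ := Nat.exists_eq_add_of_le hm
    have he : 2 * (1 + m') - 1 = 1 + 2 * m' := by omega
    rw [he]
    ring
  -- |σ| * (2^N + 1) ≤ c^m - 1
  set A := |∑ j : Fin m, x j * 4 ^ ((j : ℕ) * N)| with hA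
  have h5 : A * (2 ^ N + 1) ≤ c ^ m - 1 := by
    have := mul_le_mul_of_nonneg_right h1 (show (0:ℤ) ≤ 2 ^ N + 1 by positivity)
    calc A * (2 ^ N + 1) ≤ (2 ^ N - 1) * S * (2 ^ N + 1) := this
      _ = S * ((2 ^ N - 1) * (2 ^ N + 1)) := by ring
      _ = S * (c - 1) := by rw [h2]
      _ = c ^ m - 1 := hgeom
  -- conclude
  set P : ℤ := 2 ^ ((2 * m - 1) * N) with hP
  have hPpos : (0 : ℤ) < P := by positivity
  have hAnn : 0 ≤ A := abs_nonneg _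
  by_contra h
  push_neg at h
  have hAP : P ≤ A := by omega
  have h2N : (1 : ℤ) ≤ 2 ^ N := one_le_pow₀ (by norm_num)
  have := mul_le_mul_of_nonneg_right hAP (show (0:ℤ) ≤ 2 ^ N + 1 by positivity)
  rw [h3] at h5
  nlinarith

/-- For `d = m + 1 ≥ 2` and `N ≥ 1`, `f_{d,N}` is injective on the box
`(-2^N, 2^N)^d ∩ ℤ^d`. -/
theorem fdN_injOn_box (m N : ℕ) (hm : 1 ≤ m) (hN : 1 ≤ N) :
    Set.InjOn (fdN m N)
      {p : (Fin m → ℤ) × ℤ | (∀ j : Fin m, |p.1 j| < 2 ^ N) ∧ |p.2| < 2 ^ N} := by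
  intro p hp q hq hfe
  obtain ⟨hp1, hp2⟩ := hp
  obtain ⟨hq1, hq2⟩ := hq
  unfold fdN at hfe
  set K := (2 * m - 1) * N + 2 with hK
  set σp := ∑ j : Fin m, p.1 j * 4 ^ ((j : ℕ) * N) with hσp
  set σq := ∑ j : Fin m, q.1 j * 4 ^ ((j : ℕ) * N) with hσq
  have hbp : |σp| ≤ 2 ^ ((2 * m - 1) * N) - 1 := abs_sigma_le m N hm hN p.1 hp1
  have hbq : |σq| ≤ 2 ^ ((2 * m - 1) * N) - 1 := abs_sigma_le m N hm hN q.1 hq1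
  have hKval : (2 : ℤ) ^ K = 4 * 2 ^ ((2 * m - 1) * N) := by
    rw [hK, pow_add]; ring
  have hrp : 0 ≤ p.2 % 2 ∧ p.2 % 2 < 2 := ⟨Int.emod_nonneg _ (by norm_num), Int.emod_lt_of_pos _ (by norm_num)⟩
  have hrq : 0 ≤ q.2 % 2 ∧ q.2 % 2 < 2 := ⟨Int.emod_nonneg _ (by norm_num), Int.emod_lt_of_pos _ (by norm_num)⟩
  -- isolate the high part
  have hkey : (p.2 / 2 - q.2 / 2) * 2 ^ K = (2 * σq + q.2 % 2) - (2 * σp + p.2 % 2) := by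
    linarith [hfe]
  have hhigh : p.2 / 2 = q.2 / 2 := by
    by_contra h
    have ha : 1 ≤ |p.2 / 2 - q.2 / 2| := Int.one_le_abs (sub_ne_zero_of_ne h)
    have hKpos : (0 : ℤ) < 2 ^ K := by positivity
    have hl : (2 : ℤ) ^ K ≤ |(p.2 / 2 - q.2 / 2) * 2 ^ K| := by
      rw [abs_mul, abs_of_pos hKpos]
      nlinarith
    have hr : |(2 * σq + q.2 % 2) - (2 * σp + p.2 % 2)| < 2 ^ K := by
      rw [hKval]
      have h1 := abs_le.mp hbp
      have h2 := abs_le.mp hbq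
      rw [abs_lt]
      constructor <;> nlinarith [h1.1, h1.2, h2.1, h2.2, hrp.1, hrp.2, hrq.1, hrq.2]
    rw [hkey] at hl
    linarith
  have hlow : 2 * σp + p.2 % 2 = 2 * σq + q.2 % 2 := by
    rw [hhigh] at hkey
    simp at hkey
    linarith
  have hσeq : σp = σq := by omega
  have hy : p.2 = q.2 := by omega
  -- now the vectors
  have hx : p.1 = q.1 := by
    set c : ℤ := 4 ^ N with hc
    have hcpow : ∀ j : ℕ, (4 : ℤ) ^ (j * N) = c ^ j := by
      intro j; rw [hc, ← pow_mul, mul_comm]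
    set d : ℕ → ℤ := fun j => if h : j < m then p.1 ⟨j, h⟩ - q.1 ⟨j, h⟩ else 0 with hd
    have hdb : ∀ j, |d j| < c := by
      intro j
      have hcge : (2 : ℤ) * 2 ^ N ≤ c := by
        rw [hc, show (4 : ℤ) = 2 ^ 2 by norm_num, ← pow_mul]
        calc (2 : ℤ) * 2 ^ N ≤ 2 ^ N * 2 ^ N := by
              have : (2 : ℤ) ≤ 2 ^ N := by
                calc (2 : ℤ) = 2 ^ 1 := by norm_num
                  _ ≤ 2 ^ N := pow_le_pow_right₀ (by norm_num) hN
              nlinarith [pow_pos (show (0:ℤ) < 2 by norm_num) N]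
          _ = 2 ^ (2 * N) := by rw [two_mul, pow_add]
      rw [hd]
      by_cases h : j < m
      · simp only [h, dif_pos]
        have h1 := hp1 ⟨j, h⟩
        have h2 := hq1 ⟨j, h⟩
        have := abs_sub_abs_le_abs_sub (p.1 ⟨j, h⟩) (q.1 ⟨j, h⟩)
        have := abs_sub (p.1 ⟨j, h⟩) (q.1 ⟨j, h⟩)
        omega
      · simp only [h, dif_neg, not_false_iff, abs_zero]
        have : (0 : ℤ) < 2 ^ N := by positivity
        omega
    have hsum : ∑ j ∈ Finset.range m, d j * c ^ j = 0 := by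
      have hconv : ∑ j ∈ Finset.range m, d j * c ^ j = σp - σq := by
        rw [hσp, hσq, ← Finset.sum_sub_distrib]
        rw [← Fin.sum_univ_eq_sum_range (fun j => d j * c ^ j) m]
        apply Finset.sum_congr rfl
        intro j _
        rw [hd]
        simp only [j.isLt, dif_pos]
        rw [hcpow]
        ring
      rw [hconv, hσeq]; ring
    have hall := digits_all_zero m c d hdb hsum
    funext j
    have := hall j j.isLt
    rw [hd] at this
    simp only [j.isLt, dif_pos] at this
    have : p.1 ⟨(j : ℕ), j.isLt⟩ = q.1 ⟨(j : ℕ), j.isLt⟩ := by omega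
    simpa using this
  exact Prod.ext hx hy
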